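/- If a density matrix ρ on ℂ^m ⊗ ℂ^n is separable, then its partial transpose over the second factor ρ^{T_B} is positive semidefinite. (Peres–Horodecki necessary criterion for separability.) -/

import Mathlib

open Matrix Kronecker
open scoped ComplexOrder

noncomputable section

/-- A density matrix: positive semidefinite with unit trace. -/
def IsDensityMatrix {d : Type*} [Fintype d] [DecidableEq d] (ρ : Matrix d d ℂ) : Prop :=
  ρ.PosSemidef ∧ ρ.trace = 1

/-- A density matrix on `ℂ^m ⊗ ℂ^n` is separable if it is a finite convex combination
of Kronecker products of density matrices on the factors. -/
def IsSepState {m n : ℕ} (ρ : Matrix (Fin m × Fin n) (Fin m × Fin n) ℂ) : Prop :=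
  ∃ (k : ℕ) (p : Fin k → ℝ) (σ : Fin k → Matrix (Fin m) (Fin m) ℂ)
    (τ : Fin k → Matrix (Fin n) (Fin n) ℂ),
    (∀ i, 0 ≤ p i) ∧ (∑ i, p i = 1) ∧
    (∀ i, IsDensityMatrix (σ i)) ∧ (∀ i, IsDensityMatrix (τ i)) ∧
    ρ = ∑ i, ((p i : ℂ)) • ((σ i) ⊗ₖ (τ i))

/-- Partial transpose over the second tensor factor:
`(M^{T_B})_{(i,j),(i',j')} = M_{(i,j'),(i',j)}`. -/
def ptransposeB {m n : ℕ} (M : Matrix (Fin m × Fin n) (Fin m × Fin n) ℂ) :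
    Matrix (Fin m × Fin n) (Fin m × Fin n) ℂ :=
  Matrix.of fun p q => M (p.1, q.2) (q.1, p.2)

lemma kron_conjTranspose {m n : ℕ} (A : Matrix (Fin m) (Fin m) ℂ)
    (B : Matrix (Fin n) (Fin n) ℂ) : (A ⊗ₖ B)ᴴ = Aᴴ ⊗ₖ Bᴴ := by
  ext p q
  simp [Matrix.conjTranspose_apply, Matrix.kroneckerMap_apply, mul_comm]

lemma kron_posSemidef {m n : ℕ} {A : Matrix (Fin m) (Fin m) ℂ}
    {B : Matrix (Fin n) (Fin n) ℂ} (hA : A.PosSemidef) (hB : B.PosSemidef) :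
    (A ⊗ₖ B).PosSemidef := by
  exact hA.kronecker hB

lemma psd_smul {d : Type*} [Fintype d] {M : Matrix d d ℂ} (hM : M.PosSemidef)
    {c : ℝ} (hc : 0 ≤ c) : ((c : ℂ) • M).PosSemidef := by
  constructor
  · unfold Matrix.IsHermitian
    rw [Matrix.conjTranspose_smul, hM.1.eq]
    congr 1
    simp
  · intro x
    exact (hM.smul (a := (c : ℂ)) (by exact_mod_cast hc)).2 x

lemma psd_add {d : Type*} [Fintype d] {M N : Matrix d d ℂ} (hM : M.PosSemidef)
    (hN : N.PosSemidef) : (M + N).PosSemidef := by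
  constructor
  · unfold Matrix.IsHermitian
    rw [Matrix.conjTranspose_add, hM.1.eq, hN.1.eq]
  · intro x
    exact (hM.add hN).2 x

lemma psd_sum {d : Type*} [Fintype d] [DecidableEq d] {k : ℕ} {M : Fin k → Matrix d d ℂ}
    (h : ∀ i, (M i).PosSemidef) : (∑ i, M i).PosSemidef := by
  classical
  induction (Finset.univ : Finset (Fin k)) using Finset.induction with
  | empty => simpa using Matrix.PosSemidef.zero
  | insert x s hx ih => rw [Finset.sum_insert hx]; exact psd_add (h _) ih

/-- Peres–Horodecki necessary criterion: a separable density matrix has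
positive-semidefinite partial transpose. -/
theorem separable_implies_ppt {m n : ℕ}
    (ρ : Matrix (Fin m × Fin n) (Fin m × Fin n) ℂ)
    (hρd : IsDensityMatrix ρ) (hρsep : IsSepState ρ) :
    (ptransposeB ρ).PosSemidef := by
  obtain ⟨k, p, σ, τ, hp, hsum, hσ, hτ, hρ⟩ := hρsep
  have key : ptransposeB ρ = ∑ i, ((p i : ℂ)) • ((σ i) ⊗ₖ (τ i)ᵀ) := by
    ext q r
    simp only [hρ, ptransposeB, Matrix.of_apply, Matrix.sum_apply, Matrix.smul_apply,
      Matrix.kroneckerMap_apply, Matrix.transpose_apply, smul_eq_mul]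
  rw [key]
  exact psd_sum fun i => psd_smul (kron_posSemidef (hσ i).1 (hτ i).1.transpose) (hp i)
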